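/- Let 0 ≤ p_0 < p_1 < p_2 < p_3 and let x_1, x_3 ∈ (0,1] with x_1 > x_3 and x_1 + x_3 ≤ 1. Then (1-x_1)²/((1-x_1)(p_3-p_0) - x_3(p_1-p_0)) + 1/((p_3-p_1) - x_3(p_2-p_1)) + (1-x_3)/(p_3-p_2) > (1-x_3)²/((1-x_3)(p_3-p_0) - x_1(p_1-p_0)) + 1/((p_3-p_1) - x_1(p_2-p_1)) + (1-x_1)/(p_3-p_2), provided all denominators are strictly positive. -/

import Mathlib

/-- Swapping replacement probabilities so the end-most worker is replaced more often than
the front-most worker strictly lowers the principal's compensation cost. -/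
theorem stmt_7 (p0 p1 p2 p3 x1 x3 : ℝ)
    (hp0 : 0 ≤ p0) (h01 : p0 < p1) (h12 : p1 < p2) (h23 : p2 < p3)
    (hx1 : 0 < x1) (hx1' : x1 ≤ 1) (hx3 : 0 < x3) (hx3' : x3 ≤ 1)
    (hgt : x3 < x1) (hsum : x1 + x3 ≤ 1)
    (hd1 : 0 < (1 - x1) * (p3 - p0) - x3 * (p1 - p0))
    (hd2 : 0 < (1 - x3) * (p3 - p0) - x1 * (p1 - p0))
    (hd3 : 0 < (p3 - p1) - x3 * (p2 - p1))
    (hd4 : 0 < (p3 - p1) - x1 * (p2 - p1)) :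
    (1 - x3) ^ 2 / ((1 - x3) * (p3 - p0) - x1 * (p1 - p0))
      + 1 / ((p3 - p1) - x1 * (p2 - p1)) + (1 - x1) / (p3 - p2)
    < (1 - x1) ^ 2 / ((1 - x1) * (p3 - p0) - x3 * (p1 - p0))
      + 1 / ((p3 - p1) - x3 * (p2 - p1)) + (1 - x3) / (p3 - p2) := by
  have hs : 0 < p3 - p2 := by linarith
  have hq : 0 < p3 - p1 := by linarith
  have hr : 0 < p2 - p1 := by linarith
  have hQ : 0 < p1 - p0 := by linarith
  have hx : 0 ≤ x1 - x3 := by linarith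
  have e1 : (1 - x1) ^ 2 / ((1 - x1) * (p3 - p0) - x3 * (p1 - p0))
      - (1 - x3) ^ 2 / ((1 - x3) * (p3 - p0) - x1 * (p1 - p0))
      + (x1 - x3) / (p3 - p1)
      = (x1 - x3) * (p1 - p0) ^ 2 * ((1 - x1) + (1 - x3) - 1) ^ 2
        / ((p3 - p1) * (((1 - x1) * (p3 - p0) - x3 * (p1 - p0))
            * ((1 - x3) * (p3 - p0) - x1 * (p1 - p0)))) := by
    rw [div_sub_div _ _ hd1.ne' hd2.ne', div_add_div _ _ (by positivity) hq.ne', div_eq_div_iff (by positivity) (by positivity)]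
    ring
  have h1 : 0 ≤ (1 - x1) ^ 2 / ((1 - x1) * (p3 - p0) - x3 * (p1 - p0))
      - (1 - x3) ^ 2 / ((1 - x3) * (p3 - p0) - x1 * (p1 - p0))
      + (x1 - x3) / (p3 - p1) := by
    rw [e1]
    positivity
  have hkey : (p3 - p2) * (p3 - p1)
      < ((p3 - p1) - x3 * (p2 - p1)) * ((p3 - p1) - x1 * (p2 - p1)) := by
    nlinarith [mul_pos hx1 hx3, mul_pos hq hr, sq_nonneg (p2 - p1),
      mul_pos (mul_pos hx1 hx3) (mul_pos hr hr)]
  have e2 : 1 / ((p3 - p1) - x3 * (p2 - p1)) - 1 / ((p3 - p1) - x1 * (p2 - p1))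
      + (x1 - x3) / (p3 - p2) - (x1 - x3) / (p3 - p1)
      = (x1 - x3) * (p2 - p1)
        * (((p3 - p1) - x3 * (p2 - p1)) * ((p3 - p1) - x1 * (p2 - p1))
            - (p3 - p2) * (p3 - p1))
        / ((p3 - p2) * (p3 - p1)
            * (((p3 - p1) - x3 * (p2 - p1)) * ((p3 - p1) - x1 * (p2 - p1)))) := by
    rw [div_sub_div _ _ hd3.ne' hd4.ne', div_add_div _ _ (by positivity) hs.ne', div_sub_div _ _ (by positivity) hq.ne', div_eq_div_iff (by positivity) (by positivity)]
    ring
  have h2 : 0 < 1 / ((p3 - p1) - x3 * (p2 - p1)) - 1 / ((p3 - p1) - x1 * (p2 - p1))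
      + (x1 - x3) / (p3 - p2) - (x1 - x3) / (p3 - p1) := by
    rw [e2]
    apply div_pos
    · apply mul_pos (mul_pos (by linarith) hr)
      linarith
    · exact mul_pos (mul_pos hs hq) (mul_pos hd3 hd4)
  have e3 : (1 - x3) / (p3 - p2) - (1 - x1) / (p3 - p2) = (x1 - x3) / (p3 - p2) := by
    ring
  linarith
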